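/- Let 0 < t < 1 and let ε, ε' : Fin 3 → ℝ be sign vectors (values in {-1,1}) differing in exactly two coordinates. Then -⟨N t ε, N t ε'⟩ / √(⟨N t ε, N t ε⟩ · ⟨N t ε', N t ε'⟩) = (3 - t²)/(1 + t²), and this quantity is strictly greater than 1. In particular, the twelve pairs of negative-octet hyperplanes of the deformed configuration that were tangent in the 24-cell pull apart to a positive distance ℓ with cosh ℓ = (3 - t²)/(1 + t²) (Proposition 6.2). -/

import Mathlib

/-- The Minkowski inner product on `ℝ^{1,4}`, identified with `Fin 5 → ℝ`. -/
noncomputable def mink (v w : Fin 5 → ℝ) : ℝ :=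
  -(v 0 * w 0) + v 1 * w 1 + v 2 * w 2 + v 3 * w 3 + v 4 * w 4

/-- The positive octet space-like vectors of the deformed 24-cell (Table 6.1). -/
noncomputable def Pvec (t : ℝ) (ε : Fin 3 → ℝ) : Fin 5 → ℝ :=
  ![Real.sqrt 2, ε 0, ε 1, ε 2, (ε 0 * ε 1 * ε 2) / t]

/-- The negative octet space-like vectors of the deformed 24-cell (Table 6.1). -/
noncomputable def Nvec (t : ℝ) (ε : Fin 3 → ℝ) : Fin 5 → ℝ :=
  ![Real.sqrt 2, ε 0, ε 1, ε 2, -((ε 0 * ε 1 * ε 2) * t)]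


lemma mink_self_aux (t : ℝ) (ε : Fin 3 → ℝ) (hε : ∀ i, ε i = -1 ∨ ε i = 1) :
    mink (Nvec t ε) (Nvec t ε) = 1 + t ^ 2 := by
  have e0 := hε 0; have e1 := hε 1; have e2 := hε 2
  simp only [mink, Nvec]
  norm_num [Matrix.cons_val_zero, Matrix.cons_val_one]
  rcases e0 with h|h <;> rcases e1 with h1|h1 <;> rcases e2 with h2'|h2' <;>
    rw [h, h1, h2'] <;> simp <;> ring

lemma mink_pair_aux (t : ℝ) (ε ε' : Fin 3 → ℝ)
    (hε : ∀ i, ε i = -1 ∨ ε i = 1) (hε' : ∀ i, ε' i = -1 ∨ ε' i = 1)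
    (hd : Nat.card {i : Fin 3 // ε i ≠ ε' i} = 2) :
    mink (Nvec t ε) (Nvec t ε') = t ^ 2 - 3 := by
  rw [Nat.card_eq_fintype_card, Fintype.card_subtype, Finset.card_filter,
    Fin.sum_univ_three] at hd
  have e0 := hε 0; have e1 := hε 1; have e2 := hε 2
  have f0 := hε' 0; have f1 := hε' 1; have f2 := hε' 2
  simp only [mink, Nvec]
  norm_num [Matrix.cons_val_zero, Matrix.cons_val_one]
  rcases e0 with h|h <;> rcases e1 with h1|h1 <;> rcases e2 with h2'|h2' <;>
    rcases f0 with g|g <;> rcases f1 with g1|g1 <;> rcases f2 with g2|g2 <;>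
    rw [h, h1, h2', g, g1, g2] at hd ⊢ <;> norm_num at hd <;> simp <;> ring

/-- Two negative-octet wall vectors whose sign vectors differ in exactly two coordinates
satisfy `-⟨q,q'⟩/√(⟨q,q⟩⟨q',q'⟩) = (3 - t²)/(1 + t²) > 1`: the corresponding hyperplanes,
tangent in the 24-cell, pull apart to distance ℓ with cosh ℓ = (3-t²)/(1+t²). -/
theorem negative_pair_distance (t : ℝ) (ht0 : 0 < t) (ht1 : t < 1)
    (ε ε' : Fin 3 → ℝ) (hε : ∀ i, ε i = -1 ∨ ε i = 1) (hε' : ∀ i, ε' i = -1 ∨ ε' i = 1)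
    (hd : Nat.card {i : Fin 3 // ε i ≠ ε' i} = 2) :
    -mink (Nvec t ε) (Nvec t ε') /
      Real.sqrt (mink (Nvec t ε) (Nvec t ε) * mink (Nvec t ε') (Nvec t ε')) =
      (3 - t ^ 2) / (1 + t ^ 2) ∧
    1 < (3 - t ^ 2) / (1 + t ^ 2) := by
  have hpos : (0:ℝ) < 1 + t ^ 2 := by positivity
  constructor
  · rw [mink_self_aux t ε hε, mink_self_aux t ε' hε', mink_pair_aux t ε ε' hε hε' hd,
      show (1 + t ^ 2) * (1 + t ^ 2) = (1 + t ^ 2) ^ 2 by ring,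
      Real.sqrt_sq hpos.le]
    ring_nf
  · rw [lt_div_iff₀ hpos]; nlinarith
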